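/- arXiv:1002.1032 — 6 statements merged into one kernel-verified Lean document; each statement's English description precedes it below -/
import Mathlib

section
/- Let n be a positive integer, κ an integer, m a positive integer, and let A be an n×n (0,1)-matrix all of whose row sums and column sums equal κ. Define δ : ℤ → ℤ by δ(x) := n − x² + x − 1. If Θ^m(A) = A, then δ^m(κ) = κ, where δ^m denotes the m-fold iterate of δ. -/
open Matrix BigOperators

/-- The Hoffman–Singleton operator `Θ(A) = (s-1)·I_n + J_n - A·Aᵀ`, where `s` is the sum of
the first row of `A`. -/
def ThetaGen {n : ℕ} (A : Matrix (Fin n) (Fin n) ℤ) : Matrix (Fin n) (Fin n) ℤ :=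
  if h : 0 < n then
    ((∑ j, A ⟨0, h⟩ j) - 1) • (1 : Matrix (Fin n) (Fin n) ℤ)
      + Matrix.of (fun _ _ => (1 : ℤ)) - A * Aᵀ
  else 0

lemma theta_sums {n : ℕ} (hn : 0 < n) (A : Matrix (Fin n) (Fin n) ℤ) (r : ℤ)
    (hrow : ∀ i, ∑ j, A i j = r) (hcol : ∀ j, ∑ i, A i j = r) :
    (∀ i, ∑ j, ThetaGen A i j = (n:ℤ) - r^2 + r - 1) ∧
    (∀ j, ∑ i, ThetaGen A i j = (n:ℤ) - r^2 + r - 1) := by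
  have hAAT_row : ∀ i, ∑ j, (A * Aᵀ) i j = r^2 := by
    intro i
    simp only [Matrix.mul_apply, Matrix.transpose_apply]
    rw [Finset.sum_comm]
    calc ∑ k, ∑ j, A i k * A j k = ∑ k, A i k * r := by
          refine Finset.sum_congr rfl fun k _ => ?_
          rw [← Finset.mul_sum, hcol]
      _ = r * r := by rw [← Finset.sum_mul, hrow]
      _ = r^2 := (sq r).symm
  have hAAT_col : ∀ j, ∑ i, (A * Aᵀ) i j = r^2 := by
    intro j
    simp only [Matrix.mul_apply, Matrix.transpose_apply]
    rw [Finset.sum_comm]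
    calc ∑ k, ∑ i, A i k * A j k = ∑ k, r * A j k := by
          refine Finset.sum_congr rfl fun k _ => ?_
          rw [← Finset.sum_mul, hcol]
      _ = r * r := by rw [← Finset.mul_sum, hrow]
      _ = r^2 := (sq r).symm
  have hs : ∑ j, A ⟨0, hn⟩ j = r := hrow _
  constructor <;> intro i
  · have : ∑ j, ThetaGen A i j
        = (∑ j, (r - 1) * (1 : Matrix (Fin n) (Fin n) ℤ) i j)
          + (∑ j : Fin n, (1:ℤ)) - ∑ j, (A * Aᵀ) i j := by
      rw [← Finset.sum_add_distrib, ← Finset.sum_sub_distrib]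
      refine Finset.sum_congr rfl fun j _ => ?_
      simp only [ThetaGen, dif_pos hn, hs, Matrix.sub_apply, Matrix.add_apply, Matrix.smul_apply, Matrix.of_apply, smul_eq_mul]
    rw [this, hAAT_row]
    simp [Matrix.one_apply, Finset.mul_sum, Finset.card_univ]
    ring
  · have : ∑ j, ThetaGen A j i
        = (∑ j, (r - 1) * (1 : Matrix (Fin n) (Fin n) ℤ) j i)
          + (∑ j : Fin n, (1:ℤ)) - ∑ j, (A * Aᵀ) j i := by
      rw [← Finset.sum_add_distrib, ← Finset.sum_sub_distrib]
      refine Finset.sum_congr rfl fun j _ => ?_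
      simp only [ThetaGen, dif_pos hn, hs, Matrix.sub_apply, Matrix.add_apply, Matrix.smul_apply, Matrix.of_apply, smul_eq_mul]
    rw [this, hAAT_col]
    simp [Matrix.one_apply, Finset.mul_sum, Finset.card_univ]
    ring

theorem stmt_5 (n : ℕ) (hn : 0 < n) (κ : ℤ) (m : ℕ) (hm : 0 < m)
    (A : Matrix (Fin n) (Fin n) ℤ)
    (h01 : ∀ i j, A i j = 0 ∨ A i j = 1)
    (hrow : ∀ i, ∑ j, A i j = κ) (hcol : ∀ j, ∑ i, A i j = κ)
    (hfix : ThetaGen^[m] A = A) :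
    (fun x : ℤ => (n : ℤ) - x ^ 2 + x - 1)^[m] κ = κ := by
  set δ : ℤ → ℤ := fun x : ℤ => (n : ℤ) - x ^ 2 + x - 1 with hδ
  have key : ∀ t : ℕ,
      (∀ i, ∑ j, (ThetaGen^[t] A) i j = δ^[t] κ) ∧
      (∀ j, ∑ i, (ThetaGen^[t] A) i j = δ^[t] κ) := by
    intro t
    induction t with
    | zero => simpa using ⟨hrow, hcol⟩
    | succ t ih =>
      rw [Function.iterate_succ_apply', Function.iterate_succ_apply']
      have := theta_sums hn (ThetaGen^[t] A) (δ^[t] κ) ih.1 ih.2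
      simpa [hδ] using this
  have h1 : ∑ j, (ThetaGen^[m] A) ⟨0, hn⟩ j = δ^[m] κ := (key m).1 _
  rw [hfix, hrow] at h1
  exact h1.symm
end

section
/- Let κ be a positive integer, let n = κ² + 1, and let A be an n×n (0,1)-matrix all of whose row sums and column sums equal κ. If Θ_κ^m(A) = A for some positive integer m, then A is symmetric and all entries on the main diagonal of A are 0. -/
open Matrix BigOperators

/-- The Hoffman–Singleton operator `Θ_κ(A) = (κ-1)·I_n + J_n - A·Aᵀ`. -/
def Theta (n : ℕ) (κ : ℤ) (A : Matrix (Fin n) (Fin n) ℤ) : Matrix (Fin n) (Fin n) ℤ :=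
  (κ - 1) • (1 : Matrix (Fin n) (Fin n) ℤ) + Matrix.of (fun _ _ => (1 : ℤ)) - A * Aᵀ

lemma theta_apply (n : ℕ) (κ : ℤ) (A : Matrix (Fin n) (Fin n) ℤ) (i j : Fin n) :
    Theta n κ A i j = (κ - 1) * (if i = j then 1 else 0) + 1 - ∑ k, A i k * A j k := by
  simp only [Theta, Matrix.sub_apply, Matrix.add_apply, Matrix.smul_apply, Matrix.one_apply,
    smul_eq_mul, Matrix.of_apply, Matrix.mul_apply, Matrix.transpose_apply]

lemma theta_symm (n : ℕ) (κ : ℤ) (A : Matrix (Fin n) (Fin n) ℤ) :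
    (Theta n κ A).IsSymm := by
  unfold Matrix.IsSymm
  ext i j
  rw [Matrix.transpose_apply, theta_apply n κ A j i, theta_apply n κ A i j]
  have h1 : (if j = i then (1 : ℤ) else 0) = (if i = j then (1 : ℤ) else 0) := by
    simp [eq_comm]
  rw [h1]
  have h2 : ∑ k, A j k * A i k = ∑ k, A i k * A j k :=
    Finset.sum_congr rfl fun k _ => mul_comm _ _
  rw [h2]

lemma int_le_self_mul (x : ℤ) : x ≤ x * x := by
  rcases le_or_gt x 0 with h | h
  · exact h.trans (mul_self_nonneg x)
  · nlinarith

lemma theta_sums_s7 (κ : ℕ) (X : Matrix (Fin (κ ^ 2 + 1)) (Fin (κ ^ 2 + 1)) ℤ)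
    (hr : ∀ i, ∑ j, X i j = (κ : ℤ)) (hc : ∀ j, ∑ i, X i j = (κ : ℤ)) :
    (∀ i, ∑ j, Theta (κ ^ 2 + 1) (κ : ℤ) X i j = (κ : ℤ)) ∧
      (∀ j, ∑ i, Theta (κ ^ 2 + 1) (κ : ℤ) X i j = (κ : ℤ)) := by
  have hrow : ∀ i, ∑ j, Theta (κ ^ 2 + 1) (κ : ℤ) X i j = (κ : ℤ) := by
    intro i
    have h1 : ∑ j, Theta (κ ^ 2 + 1) (κ : ℤ) X i j
        = ∑ j, (((κ : ℤ) - 1) * (if i = j then 1 else 0) + 1 - ∑ k, X i k * X j k) := by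
      exact Finset.sum_congr rfl fun j _ => theta_apply _ _ _ _ _
    rw [h1]
    rw [Finset.sum_sub_distrib, Finset.sum_add_distrib]
    have h2 : ∑ j : Fin (κ ^ 2 + 1), ((κ : ℤ) - 1) * (if i = j then 1 else 0)
        = (κ : ℤ) - 1 := by
      rw [← Finset.mul_sum]
      simp
    have h3 : ∑ _j : Fin (κ ^ 2 + 1), (1 : ℤ) = (κ : ℤ) ^ 2 + 1 := by
      simp
    have h4 : ∑ j : Fin (κ ^ 2 + 1), ∑ k, X i k * X j k = (κ : ℤ) * κ := by
      rw [Finset.sum_comm]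
      have : ∀ k : Fin (κ ^ 2 + 1), ∑ j, X i k * X j k = X i k * κ := by
        intro k
        rw [← Finset.mul_sum, hc k]
      rw [Finset.sum_congr rfl fun k _ => this k, ← Finset.sum_mul, hr i, mul_comm]
    rw [h2, h3, h4]
    ring
  refine ⟨hrow, fun j => ?_⟩
  have hs := theta_symm (κ ^ 2 + 1) (κ : ℤ) X
  calc ∑ i, Theta (κ ^ 2 + 1) (κ : ℤ) X i j
      = ∑ i, Theta (κ ^ 2 + 1) (κ : ℤ) X j i := by
        refine Finset.sum_congr rfl fun i _ => ?_
        have h := congrFun (congrFun hs j) i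
        rw [Matrix.transpose_apply] at h
        exact h
    _ = (κ : ℤ) := hrow j

theorem stmt_7 (κ : ℕ) (hκ : 0 < κ)
    (A : Matrix (Fin (κ ^ 2 + 1)) (Fin (κ ^ 2 + 1)) ℤ)
    (h01 : ∀ i j, A i j = 0 ∨ A i j = 1)
    (hrow : ∀ i, ∑ j, A i j = (κ : ℤ)) (hcol : ∀ j, ∑ i, A i j = (κ : ℤ))
    (m : ℕ) (hm : 0 < m) (hfix : (Theta (κ ^ 2 + 1) (κ : ℤ))^[m] A = A) :
    A.IsSymm ∧ ∀ i, A i i = 0 := by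
  set Θ := Theta (κ ^ 2 + 1) (κ : ℤ) with hΘ
  -- all iterates have row and column sums κ
  have hsums : ∀ k, (∀ i, ∑ j, (Θ^[k] A) i j = (κ : ℤ)) ∧
      (∀ j, ∑ i, (Θ^[k] A) i j = (κ : ℤ)) := by
    intro k
    induction k with
    | zero => exact ⟨hrow, hcol⟩
    | succ k ih =>
      rw [Function.iterate_succ_apply']
      exact theta_sums_s7 κ _ ih.1 ih.2
  obtain ⟨m', rfl⟩ : ∃ m', m = m' + 1 := ⟨m - 1, (Nat.succ_pred_eq_of_pos hm).symm⟩
  set C := Θ^[m'] A with hC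
  have hAC : A = Θ C := by
    conv_lhs => rw [← hfix]
    rw [Function.iterate_succ_apply']
  constructor
  · rw [hAC]; exact theta_symm _ _ _
  · intro i
    have hdiag : A i i = (κ : ℤ) - ∑ k, C i k * C i k := by
      rw [hAC, hΘ, theta_apply]
      rw [if_pos rfl]
      ring
    have hle : (κ : ℤ) ≤ ∑ k, C i k * C i k := by
      have := (hsums m').1 i
      calc (κ : ℤ) = ∑ k, C i k := this.symm
        _ ≤ ∑ k, C i k * C i k := Finset.sum_le_sum fun k _ => int_le_self_mul _
    have h0 : A i i ≤ 0 := by omega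
    rcases h01 i i with h | h
    · exact h
    · omega
end

section
/- Let κ be a positive integer and let G be a κ-regular simple graph on κ² + 1 vertices containing no cycle of length 4. Then a vertex v of G lies in no 3-cycle (triangle) of G if and only if v is a centre of G with radius 2, i.e. every vertex w of G satisfies dist_G(v, w) ≤ 2. -/
open Matrix BigOperators

theorem stmt_11 (κ : ℕ) (hκ : 0 < κ) (V : Type*) [Fintype V] [DecidableEq V]
    (hcard : Fintype.card V = κ ^ 2 + 1)
    (G : SimpleGraph V) [DecidableRel G.Adj]
    (hreg : G.IsRegularOfDegree κ)
    (hC4free : ∀ v w : V, v ≠ w → ∀ a b : V, a ≠ b →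
      G.Adj v a → G.Adj v b → G.Adj w a → G.Adj w b → False)
    (v : V) :
    (¬ ∃ a b : V, G.Adj v a ∧ G.Adj v b ∧ G.Adj a b) ↔
      (∀ w : V, ∃ p : G.Walk v w, p.length ≤ 2) := by
  classical
  have hdeg : ∀ x : V, (G.neighborFinset x).card = κ := fun x => by
    rw [G.card_neighborFinset_eq_degree]; exact hreg x
  set N : Finset V := G.neighborFinset v with hN
  set M : Finset V := insert v N with hM
  have hvN : v ∉ N := by simp [hN]
  have hcardM : M.card = κ + 1 := by
    rw [hM, Finset.card_insert_of_notMem hvN, hN, hdeg]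
  set S : V → Finset V := fun a => G.neighborFinset a \ M with hS
  set T : Finset V := M ∪ N.biUnion S with hT
  have hSstats : ∀ a : V, (S a).card + (G.neighborFinset a ∩ M).card = κ := fun a => by
    have h := Finset.card_sdiff_add_card_inter (G.neighborFinset a) M
    rw [hdeg] at h
    exact h
  -- membership in T from a short-walk-style disjunction
  have toT : ∀ w : V, (w = v ∨ G.Adj v w ∨ ∃ a, G.Adj v a ∧ G.Adj a w) → w ∈ T := by
    intro w hw
    rcases hw with rfl | hadj | ⟨a, hva, haw⟩
    · exact Finset.mem_union_left _ (by simp [hM])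
    · exact Finset.mem_union_left _ (by simp [hM, hN, hadj])
    · by_cases hwM : w ∈ M
      · exact Finset.mem_union_left _ hwM
      · refine Finset.mem_union_right _ (Finset.mem_biUnion.mpr ⟨a, ?_, ?_⟩)
        · simp [hN, hva]
        · simp [hS, hwM, haw]
  -- membership in T gives a short walk
  have ofT : ∀ w : V, w ∈ T → ∃ p : G.Walk v w, p.length ≤ 2 := by
    intro w hw
    rcases Finset.mem_union.mp hw with hwM | hwB
    · rcases Finset.mem_insert.mp hwM with rfl | hwN
      · exact ⟨SimpleGraph.Walk.nil, by simp⟩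
      · have hadj : G.Adj v w := by rwa [hN, SimpleGraph.mem_neighborFinset] at hwN
        exact ⟨hadj.toWalk, by simp⟩
    · obtain ⟨a, haN, hwS⟩ := Finset.mem_biUnion.mp hwB
      have hva : G.Adj v a := by rwa [hN, SimpleGraph.mem_neighborFinset] at haN
      have haw : G.Adj a w := by
        have := (Finset.mem_sdiff.mp hwS).1
        rwa [SimpleGraph.mem_neighborFinset] at this
      exact ⟨SimpleGraph.Walk.cons hva haw.toWalk, by simp⟩
  -- decomposition of short walks
  have hdec : ∀ (w : V) (p : G.Walk v w), p.length ≤ 2 →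
      w = v ∨ G.Adj v w ∨ ∃ a, G.Adj v a ∧ G.Adj a w := by
    intro w p hp
    cases p with
    | nil => exact Or.inl rfl
    | cons h q =>
      cases q with
      | nil => exact Or.inr (Or.inl h)
      | cons h' q' =>
        cases q' with
        | nil => exact Or.inr (Or.inr ⟨_, h, h'⟩)
        | cons h'' q'' => simp [SimpleGraph.Walk.length_cons] at hp
  constructor
  · -- no triangle → radius 2
    intro hno
    have hScard : ∀ a ∈ N, (S a).card + 1 = κ := by
      intro a haN
      have hva : G.Adj v a := by rwa [hN, SimpleGraph.mem_neighborFinset] at haN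
      have hint : G.neighborFinset a ∩ M = {v} := by
        ext u
        simp only [Finset.mem_inter, SimpleGraph.mem_neighborFinset, hM, hN,
          Finset.mem_insert, Finset.mem_singleton]
        constructor
        · rintro ⟨hau, (rfl | hu)⟩
          · rfl
          · exact absurd ⟨a, u, hva, hu, hau⟩ hno
        · rintro rfl
          exact ⟨hva.symm, Or.inl rfl⟩
      have h := hSstats a
      rw [hint, Finset.card_singleton] at h
      exact h
    have hdisj : ∀ a ∈ N, ∀ b ∈ N, a ≠ b → Disjoint (S a) (S b) := by
      intro a haN b hbN hab
      rw [Finset.disjoint_left]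
      intro w hwa hwb
      have hva : G.Adj v a := by rwa [hN, SimpleGraph.mem_neighborFinset] at haN
      have hvb : G.Adj v b := by rwa [hN, SimpleGraph.mem_neighborFinset] at hbN
      have haw : G.Adj a w := by
        have := (Finset.mem_sdiff.mp hwa).1
        rwa [SimpleGraph.mem_neighborFinset] at this
      have hbw : G.Adj b w := by
        have := (Finset.mem_sdiff.mp hwb).1
        rwa [SimpleGraph.mem_neighborFinset] at this
      have hwM : w ∉ M := (Finset.mem_sdiff.mp hwa).2
      have hwv : v ≠ w := fun h => hwM (h ▸ Finset.mem_insert_self v N)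
      exact hC4free v w hwv a b hab hva hvb haw.symm hbw.symm
    have hdisjMT : Disjoint M (N.biUnion S) := by
      rw [Finset.disjoint_left]
      intro w hwM hwB
      obtain ⟨a, _, hwS⟩ := Finset.mem_biUnion.mp hwB
      exact (Finset.mem_sdiff.mp hwS).2 hwM
    have hcardB : (N.biUnion S).card = κ * (κ - 1) := by
      rw [Finset.card_biUnion hdisj]
      have : ∀ a ∈ N, (S a).card = κ - 1 := by
        intro a haN; have := hScard a haN; omega
      rw [Finset.sum_congr rfl this, Finset.sum_const, hN, hdeg, smul_eq_mul]
    have hcardT : T.card = κ ^ 2 + 1 := by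
      rw [hT, Finset.card_union_of_disjoint hdisjMT, hcardM, hcardB]
      obtain ⟨k, rfl⟩ : ∃ k, κ = k + 1 := ⟨κ - 1, by omega⟩
      simp only [Nat.add_sub_cancel]
      ring
    have hTuniv : T = Finset.univ :=
      Finset.eq_univ_of_card T (by rw [hcardT, ← hcard, Fintype.card])
    intro w
    exact ofT w (hTuniv ▸ Finset.mem_univ w)
  · -- radius 2 → no triangle
    rintro hrad ⟨a, b, hva, hvb, hab⟩
    have haN : a ∈ N := by rw [hN, SimpleGraph.mem_neighborFinset]; exact hva
    have hbN : b ∈ N := by rw [hN, SimpleGraph.mem_neighborFinset]; exact hvb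
    have habne : a ≠ b := hab.ne
    have hsub : (Finset.univ : Finset V) ⊆ T := by
      intro w _
      obtain ⟨p, hp⟩ := hrad w
      exact toT w (hdec w p hp)
    have hle : κ ^ 2 + 1 ≤ T.card := by
      calc κ ^ 2 + 1 = (Finset.univ : Finset V).card := by
            rw [Finset.card_univ, hcard]
        _ ≤ T.card := Finset.card_le_card hsub
    have hTle : T.card ≤ M.card + ∑ x ∈ N, (S x).card := by
      rw [hT]
      exact le_trans (Finset.card_union_le _ _)
        (Nat.add_le_add_left (Finset.card_biUnion_le) _)
    -- bounds on the pieces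
    have hSx : ∀ x ∈ N, (S x).card + 1 ≤ κ := by
      intro x hxN
      have hvx : G.Adj v x := by rwa [hN, SimpleGraph.mem_neighborFinset] at hxN
      have hv : v ∈ G.neighborFinset x ∩ M := by
        simp [SimpleGraph.mem_neighborFinset, hvx.symm, hM]
      have : 1 ≤ (G.neighborFinset x ∩ M).card := Finset.card_pos.mpr ⟨v, hv⟩
      have := hSstats x
      omega
    have hSa : (S a).card + 2 ≤ κ := by
      have hsub2 : ({v, b} : Finset V) ⊆ G.neighborFinset a ∩ M := by
        intro u hu
        rcases Finset.mem_insert.mp hu with rfl | hu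
        · simp [SimpleGraph.mem_neighborFinset, hva.symm, hM]
        · rw [Finset.mem_singleton] at hu
          subst hu
          simp [SimpleGraph.mem_neighborFinset, hab, hM, hbN]
      have h2 : 2 ≤ (G.neighborFinset a ∩ M).card := by
        have : ({v, b} : Finset V).card = 2 := by
          rw [Finset.card_insert_of_notMem (by simp [hvb.ne]), Finset.card_singleton]
        rw [← this]
        exact Finset.card_le_card hsub2
      have := hSstats a
      omega
    have hSb : (S b).card + 2 ≤ κ := by
      have hsub2 : ({v, a} : Finset V) ⊆ G.neighborFinset b ∩ M := by
        intro u hu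
        rcases Finset.mem_insert.mp hu with rfl | hu
        · simp [SimpleGraph.mem_neighborFinset, hvb.symm, hM]
        · rw [Finset.mem_singleton] at hu
          subst hu
          simp [SimpleGraph.mem_neighborFinset, hab.symm, hM, haN]
      have h2 : 2 ≤ (G.neighborFinset b ∩ M).card := by
        have : ({v, a} : Finset V).card = 2 := by
          rw [Finset.card_insert_of_notMem (by simp [hva.ne]), Finset.card_singleton]
        rw [← this]
        exact Finset.card_le_card hsub2
      have := hSstats b
      omega
    have hκ2 : 2 ≤ κ := by
      have := hSa
      omega
    have hbN' : b ∈ N.erase a := Finset.mem_erase.mpr ⟨habne.symm, hbN⟩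
    have hsum : ∑ x ∈ N, (S x).card =
        (S a).card + ((S b).card + ∑ x ∈ (N.erase a).erase b, (S x).card) := by
      rw [← Finset.add_sum_erase _ _ haN, ← Finset.add_sum_erase _ _ hbN']
    obtain ⟨k, rfl⟩ : ∃ k, κ = k + 2 := ⟨κ - 2, by omega⟩
    have hcardEE : ((N.erase a).erase b).card = k := by
      rw [Finset.card_erase_of_mem hbN', Finset.card_erase_of_mem haN, hN, hdeg]
      omega
    have hinner : ∑ x ∈ (N.erase a).erase b, (S x).card ≤ k * (k + 1) := by
      calc ∑ x ∈ (N.erase a).erase b, (S x).card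
          ≤ ∑ _x ∈ (N.erase a).erase b, (k + 1) := by
            refine Finset.sum_le_sum ?_
            intro x hx
            have hxN : x ∈ N := Finset.mem_of_mem_erase (Finset.mem_of_mem_erase hx)
            have := hSx x hxN
            omega
        _ = k * (k + 1) := by rw [Finset.sum_const, hcardEE, smul_eq_mul]
    have e1 : (k + 2) ^ 2 = k * k + 4 * k + 4 := by ring
    have e2 : k * (k + 1) = k * k + k := by ring
    linarith [hle, hTle, hcardM, hsum, hSa, hSb, hinner]
end

section
/- Let κ ≥ 2 be an integer and let G be a κ-regular simple graph on κ² + 1 vertices containing no cycle of length 4. Then G is connected and its diameter satisfies diam(G) ≤ 3. Moreover, diam(G) = 2 if and only if G has girth 5. -/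
open Matrix BigOperators

section helpers
variable {V : Type*} {G : SimpleGraph V}

lemma walk_len2' {u v : V} (w : G.Walk u v) (h : w.length = 2) :
    ∃ x, G.Adj u x ∧ G.Adj x v := by
  cases w with
  | nil => simp at h
  | cons h1 p =>
    cases p with
    | nil => simp at h
    | cons h2 q =>
      cases q with
      | nil => exact ⟨_, h1, h2⟩
      | cons h3 r => simp [SimpleGraph.Walk.length_cons] at h

lemma cycle_len3' {a : V} (w : G.Walk a a) (h : w.length = 3) :
    ∃ b c, G.Adj a b ∧ G.Adj b c ∧ G.Adj c a := by
  cases w with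
  | nil => simp at h
  | cons h1 p =>
    cases p with
    | nil => simp at h
    | cons h2 q =>
      cases q with
      | nil => simp at h
      | cons h3 r =>
        cases r with
        | nil => exact ⟨_, _, h1, h2, h3⟩
        | cons h4 s => simp [SimpleGraph.Walk.length_cons] at h

lemma cycle_len4' {a : V} (w : G.Walk a a) (hc : w.IsCycle) (h : w.length = 4) :
    ∃ b c d, G.Adj a b ∧ G.Adj b c ∧ G.Adj c d ∧ G.Adj d a ∧ a ≠ c ∧ b ≠ d := by
  cases w with
  | nil => simp at h
  | cons h1 p =>
    cases p with
    | nil => simp at h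
    | cons h2 q =>
      cases q with
      | nil => simp at h
      | cons h3 r =>
        cases r with
        | nil => simp at h
        | cons h4 s =>
          cases s with
          | nil =>
            have hn := hc.support_nodup
            simp [SimpleGraph.Walk.support_cons] at hn
            exact ⟨_, _, _, h1, h2, h3, h4, by tauto, by tauto⟩
          | cons h5 t => simp [SimpleGraph.Walk.length_cons] at h

lemma cycle3_exists' {a b c : V} (hab : G.Adj a b) (hbc : G.Adj b c) (hca : G.Adj c a) :
    ∃ w : G.Walk a a, w.IsCycle ∧ w.length = 3 := by
  refine ⟨.cons hab (.cons hbc (.cons hca .nil)), ?_, by simp⟩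
  have h1 : a ≠ b := hab.ne
  have h2 : b ≠ c := hbc.ne
  have h3 : c ≠ a := hca.ne
  simp [SimpleGraph.Walk.isCycle_def, SimpleGraph.Walk.isTrail_def, h1, h2, h3, Sym2.eq_iff]
  tauto

lemma cycle5_exists' {a b c d e : V} (h1 : G.Adj a b) (h2 : G.Adj b c) (h3 : G.Adj c d)
    (h4 : G.Adj d e) (h5 : G.Adj e a) (hac : a ≠ c) (had : a ≠ d) (hbd : b ≠ d)
    (hbe : b ≠ e) (hce : c ≠ e) :
    ∃ w : G.Walk a a, w.IsCycle ∧ w.length = 5 := by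
  refine ⟨.cons h1 (.cons h2 (.cons h3 (.cons h4 (.cons h5 .nil)))), ?_, by simp⟩
  have := h1.ne; have := h2.ne; have := h3.ne; have := h4.ne; have := h5.ne
  simp [SimpleGraph.Walk.isCycle_def, SimpleGraph.Walk.isTrail_def, Sym2.eq_iff]
  aesop

lemma egirth_le_of_cycle {a : V} (w : G.Walk a a) (hc : w.IsCycle) :
    G.egirth ≤ w.length :=
  iInf_le_of_le a (iInf_le_of_le w (iInf_le _ hc))

end helpers

open Finset

lemma main_count {V : Type*} [Fintype V] [DecidableEq V] (κ : ℕ)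
    (hcard : Fintype.card V = κ ^ 2 + 1) (G : SimpleGraph V) [DecidableRel G.Adj]
    (hreg : G.IsRegularOfDegree κ)
    (hC4free : ∀ v w : V, v ≠ w → ∀ a b : V, a ≠ b →
      G.Adj v a → G.Adj v b → G.Adj w a → G.Adj w b → False) (v : V) :
    (Finset.univ.filter (fun u => u ≠ v ∧ ¬ G.Adj v u ∧ ∀ x, ¬(G.Adj v x ∧ G.Adj x u))).card
      = ∑ x ∈ G.neighborFinset v, ((G.neighborFinset x) ∩ (G.neighborFinset v)).card ∧
    ∑ x ∈ G.neighborFinset v, ((G.neighborFinset x) ∩ (G.neighborFinset v)).card ≤ κ := by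
  classical
  set N := G.neighborFinset v with hN
  have hNcard : N.card = κ := by
    rw [hN, SimpleGraph.card_neighborFinset_eq_degree]; exact hreg v
  have hvN : v ∉ N := by simp [hN]
  set S : Finset V := Finset.univ \ insert v N with hS
  have hScard : S.card + (κ + 1) = κ ^ 2 + 1 := by
    have hsub : insert v N ⊆ Finset.univ := subset_univ _
    have := Finset.card_sdiff_add_card_eq_card hsub
    rwa [Finset.card_univ, hcard, Finset.card_insert_of_notMem hvN, hNcard] at this
  -- each x in N has at most one neighbor in N
  have hm1 : ∀ x ∈ N, ((G.neighborFinset x) ∩ N).card ≤ 1 := by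
    intro x hx
    by_contra hgt
    push_neg at hgt
    obtain ⟨a, ha, b, hb, hab⟩ := Finset.one_lt_card.mp hgt
    simp only [Finset.mem_inter, SimpleGraph.mem_neighborFinset, hN] at ha hb
    exact hC4free v x (G.ne_of_adj (by simpa [hN, SimpleGraph.mem_neighborFinset] using hx)) a b
      hab ha.2 hb.2 ha.1 hb.1
  have hM : ∑ x ∈ N, ((G.neighborFinset x) ∩ N).card ≤ κ := by
    calc ∑ x ∈ N, ((G.neighborFinset x) ∩ N).card ≤ ∑ _x ∈ N, 1 :=
          Finset.sum_le_sum hm1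
      _ = κ := by simp [hNcard]
  -- each s in S has at most one neighbor in N
  have hs1 : ∀ s ∈ S, ((G.neighborFinset s) ∩ N).card ≤ 1 := by
    intro s hs
    by_contra hgt
    push_neg at hgt
    obtain ⟨a, ha, b, hb, hab⟩ := Finset.one_lt_card.mp hgt
    simp only [Finset.mem_inter, SimpleGraph.mem_neighborFinset, hN] at ha hb
    have hsv : v ≠ s := by
      rintro rfl
      simp [hS] at hs
    exact hC4free v s hsv a b hab ha.2 hb.2 ha.1 hb.1
  -- partition of N(x) for x in N
  have hC : ∀ x ∈ N, ((G.neighborFinset x) ∩ S).card + ((G.neighborFinset x) ∩ N).card + 1 = κ := by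
    intro x hx
    have hadj : G.Adj v x := by simpa [hN, SimpleGraph.mem_neighborFinset] using hx
    have hxcard : (G.neighborFinset x).card = κ := by
      rw [SimpleGraph.card_neighborFinset_eq_degree]; exact hreg x
    have h1 : (G.neighborFinset x) ∩ S = (G.neighborFinset x) \ insert v N := by
      ext u; simp [hS]
    have h2 : (G.neighborFinset x) ∩ insert v N = insert v ((G.neighborFinset x) ∩ N) := by
      ext u
      simp only [Finset.mem_inter, Finset.mem_insert, SimpleGraph.mem_neighborFinset]
      constructor
      · rintro ⟨h3, h4 | h4⟩
        · exact Or.inl h4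
        · exact Or.inr ⟨by simpa [SimpleGraph.mem_neighborFinset] using h3, h4⟩
      · rintro (rfl | ⟨h3, h4⟩)
        · exact ⟨hadj.symm, Or.inl rfl⟩
        · exact ⟨by simpa [SimpleGraph.mem_neighborFinset] using h3, Or.inr h4⟩
    have h3 := Finset.card_inter_add_card_sdiff (G.neighborFinset x) (insert v N)
    rw [h2, Finset.card_insert_of_notMem (by simp [hvN]), hxcard, ← h1] at h3
    omega
  -- double counting
  have hD : ∑ s ∈ S, ((G.neighborFinset s) ∩ N).card
      = ∑ x ∈ N, ((G.neighborFinset x) ∩ S).card := by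
    have h1 : ∀ s : V, (G.neighborFinset s) ∩ N = N.filter (fun x => G.Adj s x) := by
      intro s; ext x; simp [SimpleGraph.mem_neighborFinset, and_comm]
    have h2 : ∀ x : V, (G.neighborFinset x) ∩ S = S.filter (fun s => G.Adj s x) := by
      intro x; ext s
      simp [SimpleGraph.mem_neighborFinset, and_comm, G.adj_comm]
    simp_rw [h1, h2, Finset.card_filter]
    exact Finset.sum_comm
  -- sum over S equals count of s with a neighbor in N
  set F : Finset V := S.filter (fun s => ((G.neighborFinset s) ∩ N).card = 0) with hF
  set A : Finset V := S.filter (fun s => ¬ ((G.neighborFinset s) ∩ N).card = 0) with hA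
  have hFA : F.card + A.card = S.card := Finset.card_filter_add_card_filter_not _
  have hE : ∑ s ∈ S, ((G.neighborFinset s) ∩ N).card = A.card := by
    rw [hA, ← Finset.sum_filter_add_sum_filter_not S
      (fun s => ((G.neighborFinset s) ∩ N).card = 0)]
    have hz : ∑ s ∈ S.filter (fun s => ((G.neighborFinset s) ∩ N).card = 0),
        ((G.neighborFinset s) ∩ N).card = 0 := by
      apply Finset.sum_eq_zero
      intro s hs
      exact (Finset.mem_filter.mp hs).2
    rw [hz, zero_add]
    rw [Finset.card_eq_sum_ones]
    apply Finset.sum_congr rfl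
    intro s hs
    obtain ⟨hsS, hs0⟩ := Finset.mem_filter.mp hs
    have := hs1 s hsS
    omega
  -- the far set is F
  have hfarF : (Finset.univ.filter
      (fun u => u ≠ v ∧ ¬ G.Adj v u ∧ ∀ x, ¬(G.Adj v x ∧ G.Adj x u))) = F := by
    ext u
    constructor
    · intro hu
      obtain ⟨-, h1, h2, h3⟩ := Finset.mem_filter.mp hu
      refine Finset.mem_filter.mpr ⟨Finset.mem_sdiff.mpr ⟨Finset.mem_univ _, ?_⟩, ?_⟩
      · simp only [Finset.mem_insert, hN, SimpleGraph.mem_neighborFinset, not_or]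
        exact ⟨h1, h2⟩
      · rw [Finset.card_eq_zero, Finset.eq_empty_iff_forall_notMem]
        intro x hx
        rw [Finset.mem_inter, SimpleGraph.mem_neighborFinset,
          SimpleGraph.mem_neighborFinset] at hx
        exact h3 x ⟨hx.2, hx.1.symm⟩
    · intro hu
      obtain ⟨huS, h0⟩ := Finset.mem_filter.mp hu
      obtain ⟨-, huI⟩ := Finset.mem_sdiff.mp huS
      simp only [Finset.mem_insert, hN, SimpleGraph.mem_neighborFinset, not_or] at huI
      refine Finset.mem_filter.mpr ⟨Finset.mem_univ _, huI.1, huI.2, fun x hx => ?_⟩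
      rw [Finset.card_eq_zero, Finset.eq_empty_iff_forall_notMem] at h0
      exact h0 x (Finset.mem_inter.mpr ⟨SimpleGraph.mem_neighborFinset _ _ _ |>.mpr hx.2.symm,
        SimpleGraph.mem_neighborFinset _ _ _ |>.mpr hx.1⟩)
  -- sum the partition identity
  have hsumC : ∑ x ∈ N, ((G.neighborFinset x) ∩ S).card
      + ∑ x ∈ N, ((G.neighborFinset x) ∩ N).card + κ = κ * κ := by
    have := Finset.sum_congr rfl hC
    rw [Finset.sum_add_distrib, Finset.sum_add_distrib] at this
    simp only [Finset.sum_const, smul_eq_mul, mul_one, hNcard] at this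
    omega
  constructor
  · rw [hfarF]
    have hpow : κ ^ 2 = κ * κ := sq κ
    rw [hpow] at hScard
    obtain ⟨q, hq⟩ : ∃ q, q = κ * κ := ⟨_, rfl⟩
    rw [← hq] at hsumC hScard
    omega
  · exact hM


theorem stmt_12 (κ : ℕ) (hκ : 2 ≤ κ) (V : Type*) [Fintype V] [DecidableEq V]
    (hcard : Fintype.card V = κ ^ 2 + 1)
    (G : SimpleGraph V) [DecidableRel G.Adj]
    (hreg : G.IsRegularOfDegree κ)
    (hC4free : ∀ v w : V, v ≠ w → ∀ a b : V, a ≠ b →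
      G.Adj v a → G.Adj v b → G.Adj w a → G.Adj w b → False) :
    G.Connected ∧ G.diam ≤ 3 ∧ (G.diam = 2 ↔ G.girth = 5) := by
  classical
  have hV : Nonempty V := by
    rw [← Fintype.card_pos_iff, hcard]; omega
  set far : V → Finset V := fun v => Finset.univ.filter
    (fun u => u ≠ v ∧ ¬ G.Adj v u ∧ ∀ x, ¬(G.Adj v x ∧ G.Adj x u)) with hfar_def
  have hmem_far : ∀ v u, u ∈ far v ↔
      (u ≠ v ∧ ¬ G.Adj v u ∧ ∀ x, ¬(G.Adj v x ∧ G.Adj x u)) := by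
    intro v u; simp [hfar_def]
  have hfar_card : ∀ v, (far v).card ≤ κ := by
    intro v
    obtain ⟨h1, h2⟩ := main_count κ hcard G hreg hC4free v
    rw [hfar_def]; rw [h1]; exact h2
  -- a triangle through v makes far v nonempty
  have htri_far : ∀ v x y, G.Adj v x → G.Adj v y → G.Adj x y → (far v).Nonempty := by
    intro v x y hvx hvy hxy
    obtain ⟨h1, _⟩ := main_count κ hcard G hreg hC4free v
    rw [← Finset.card_pos, hfar_def, h1]
    have hx : x ∈ G.neighborFinset v := by simpa using hvx
    have hy : y ∈ G.neighborFinset x ∩ G.neighborFinset v := by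
      simp [hxy, hvy]
    calc 0 < (G.neighborFinset x ∩ G.neighborFinset v).card :=
          Finset.card_pos.mpr ⟨y, hy⟩
      _ ≤ _ := Finset.single_le_sum (f := fun x => (G.neighborFinset x ∩ G.neighborFinset v).card) (fun _ _ => Nat.zero_le _) hx
  -- far v nonempty gives a triangle through v
  have hfar_tri : ∀ v, (far v).Nonempty → ∃ x y, G.Adj v x ∧ G.Adj v y ∧ G.Adj x y := by
    intro v hne
    obtain ⟨h1, _⟩ := main_count κ hcard G hreg hC4free v
    rw [← Finset.card_pos, hfar_def, h1] at hne
    obtain ⟨x, hx, hpos⟩ : ∃ x ∈ G.neighborFinset v,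
        0 < (G.neighborFinset x ∩ G.neighborFinset v).card := by
      by_contra hc
      push_neg at hc
      have : ∑ x ∈ G.neighborFinset v, (G.neighborFinset x ∩ G.neighborFinset v).card = 0 :=
        Finset.sum_eq_zero fun x hx => by have := hc x hx; omega
      omega
    obtain ⟨y, hy⟩ := Finset.card_pos.mp hpos
    simp only [Finset.mem_inter, SimpleGraph.mem_neighborFinset] at hx hy
    exact ⟨x, y, hx, hy.2, hy.1⟩
  -- reachability
  have hreach : ∀ v u, G.Reachable v u := by
    intro v u
    by_contra h
    have hsub : insert u (G.neighborFinset u) ⊆ far v := by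
      intro w hw
      have hwu : G.Reachable u w := by
        rcases Finset.mem_insert.mp hw with rfl | hw
        · rfl
        · exact (SimpleGraph.mem_neighborFinset _ _ _ |>.mp hw).reachable
      have hnw : ¬ G.Reachable v w := fun hr => h (hr.trans hwu.symm)
      rw [hmem_far]
      refine ⟨?_, fun ha => hnw ha.reachable, ?_⟩
      · rintro rfl
        exact hnw (SimpleGraph.Reachable.refl _)
      rintro x ⟨h1, h2⟩
      exact hnw (h1.reachable.trans h2.reachable)
    have hle := Finset.card_le_card hsub
    rw [Finset.card_insert_of_notMem (by simp), SimpleGraph.card_neighborFinset_eq_degree,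
      hreg u] at hle
    have := hfar_card v
    omega
  have hconn : G.Connected := ⟨fun u v => hreach u v⟩
  -- distance at most 2 outside far
  have hdist2 : ∀ v u, u ∉ far v → G.dist v u ≤ 2 := by
    intro v u hu
    rw [hmem_far] at hu
    push_neg at hu
    by_cases h1 : u = v
    · rw [h1, SimpleGraph.dist_self]
      omega
    by_cases h2 : G.Adj v u
    · rw [SimpleGraph.dist_eq_one_iff_adj.mpr h2]; omega
    obtain ⟨x, hx1, hx2⟩ := hu h1 h2
    have := SimpleGraph.dist_le (SimpleGraph.Walk.cons hx1 (SimpleGraph.Walk.cons hx2 .nil))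
    simpa using this
  -- distance at most 3 always
  have hdist3 : ∀ v u, G.dist v u ≤ 3 := by
    intro v u
    by_cases hu : u ∈ far v
    · obtain ⟨w, hw, hwnot⟩ : ∃ w ∈ G.neighborFinset u, w ∉ far v := by
        by_contra hc
        push_neg at hc
        have hsub : insert u (G.neighborFinset u) ⊆ far v := by
          intro z hz
          rcases Finset.mem_insert.mp hz with rfl | hz
          · exact hu
          · exact hc z hz
        have hle := Finset.card_le_card hsub
        rw [Finset.card_insert_of_notMem (by simp), SimpleGraph.card_neighborFinset_eq_degree,
          hreg u] at hle
        have := hfar_card v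
        omega
      have hadj : G.Adj u w := (SimpleGraph.mem_neighborFinset _ _ _).mp hw
      have h2 := hdist2 v w hwnot
      calc G.dist v u ≤ G.dist v w + G.dist w u := hconn.dist_triangle
        _ ≤ 2 + 1 := by
            have : G.dist w u = 1 := SimpleGraph.dist_eq_one_iff_adj.mpr hadj.symm
            omega
        _ = 3 := rfl
    · have := hdist2 v u hu
      omega
  -- ediam bound
  have hediam : G.ediam ≤ 3 := by
    apply SimpleGraph.ediam_le_of_edist_le
    intro u v
    obtain ⟨p, hp⟩ := (hreach u v).exists_walk_length_eq_dist
    calc G.edist u v ≤ p.length := SimpleGraph.edist_le p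
      _ ≤ 3 := by
          have := hdist3 u v
          rw [hp]
          exact_mod_cast this
  have hetop : G.ediam ≠ ⊤ := by
    intro h
    rw [h] at hediam
    exact (by simp : ¬ ((⊤:ℕ∞) ≤ 3)) hediam
  have hdiam3 : G.diam ≤ 3 := by
    have := ENat.toNat_le_toNat hediam (by simp : (3:ℕ∞) ≠ ⊤)
    simpa [SimpleGraph.diam] using this
  refine ⟨hconn, hdiam3, ?_, ?_⟩
  · -- diam = 2 → girth = 5
    intro hd2
    -- triangle-free
    have htf : ∀ v x y, G.Adj v x → G.Adj v y → G.Adj x y → False := by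
      intro v x y hvx hvy hxy
      obtain ⟨s, hs⟩ := htri_far v x y hvx hvy hxy
      rw [hmem_far] at hs
      obtain ⟨hs1, hs2, hs3⟩ := hs
      have hle : G.dist v s ≤ 2 := hd2 ▸ SimpleGraph.dist_le_diam hetop
      have h0 : G.dist v s ≠ 0 := by
        rw [SimpleGraph.dist_ne_zero_iff_ne_and_reachable]
        exact ⟨Ne.symm hs1, hreach v s⟩
      have h1 : G.dist v s ≠ 1 := fun h => hs2 (SimpleGraph.dist_eq_one_iff_adj.mp h)
      have h2 : G.dist v s = 2 := by omega
      obtain ⟨p, hp⟩ := (hreach v s).exists_walk_length_eq_dist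
      rw [h2] at hp
      obtain ⟨x', hx1, hx2⟩ := walk_len2' p hp
      exact hs3 x' ⟨hx1, hx2⟩
    have hfe : ∀ v, far v = ∅ := by
      intro v
      by_contra h
      obtain ⟨x, y, h1, h2, h3⟩ := hfar_tri v (Finset.nonempty_of_ne_empty h)
      exact htf v x y h1 h2 h3
    -- girth ≥ 5
    have hge : (5 : ℕ∞) ≤ G.egirth := by
      rw [SimpleGraph.le_egirth]
      intro a w hw
      have h3 := hw.three_le_length
      have hn3 : w.length ≠ 3 := by
        intro h
        obtain ⟨b, c, h1, h2, h3'⟩ := cycle_len3' w h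
        exact htf a b c h1 h3'.symm h2
      have hn4 : w.length ≠ 4 := by
        intro h
        obtain ⟨b, c, d, h1, h2, h3', h4, hac, hbd⟩ := cycle_len4' w hw h
        exact hC4free a c hac b d hbd h1 h4.symm h2.symm h3'
      have : 5 ≤ w.length := by omega
      exact_mod_cast this
    -- construct a 5-cycle
    obtain ⟨v⟩ := hV
    obtain ⟨a, ha⟩ : ∃ a, G.Adj v a := by
      have : 0 < (G.neighborFinset v).card := by
        rw [SimpleGraph.card_neighborFinset_eq_degree, hreg v]; omega
      obtain ⟨a, ha⟩ := Finset.card_pos.mp this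
      exact ⟨a, (SimpleGraph.mem_neighborFinset _ _ _).mp ha⟩
    obtain ⟨b, hb, hbv⟩ : ∃ b ∈ G.neighborFinset a, b ≠ v := by
      apply Finset.exists_mem_ne
      rw [SimpleGraph.card_neighborFinset_eq_degree, hreg a]; omega
    have hab : G.Adj a b := (SimpleGraph.mem_neighborFinset _ _ _).mp hb
    have hvb : ¬ G.Adj v b := fun h => htf v a b ha h hab
    obtain ⟨c, hc, hca⟩ : ∃ c ∈ G.neighborFinset b, c ≠ a := by
      apply Finset.exists_mem_ne
      rw [SimpleGraph.card_neighborFinset_eq_degree, hreg b]; omega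
    have hbc : G.Adj b c := (SimpleGraph.mem_neighborFinset _ _ _).mp hc
    have hac : ¬ G.Adj a c := fun h => htf a b c hab h hbc
    have hcv : c ≠ v := fun h => hvb (h ▸ hbc).symm
    have hvc : ¬ G.Adj v c := by
      intro h
      exact hC4free v b (Ne.symm hbv) a c (Ne.symm hca) ha h hab.symm hbc
    have hcfar : c ∉ far v := by rw [hfe]; simp
    rw [hmem_far] at hcfar
    push_neg at hcfar
    obtain ⟨x, hx1, hx2⟩ := hcfar hcv hvc
    have hxa : x ≠ a := fun h => hac (h ▸ hx2)
    have hxb : x ≠ b := fun h => hvb (h ▸ hx1)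
    obtain ⟨w, hw, hwl⟩ := cycle5_exists' ha hab hbc hx2.symm hx1.symm
      (Ne.symm hbv) (Ne.symm hcv) (Ne.symm hca) (Ne.symm hxa) (Ne.symm hxb)
    have hle : G.egirth ≤ 5 := by
      have := egirth_le_of_cycle w hw
      rw [hwl] at this
      exact_mod_cast this
    have hegirth : G.egirth = 5 := le_antisymm hle hge
    rw [SimpleGraph.girth, hegirth]
    rfl
  · -- girth = 5 → diam = 2
    intro hg5
    have hegirth : G.egirth = 5 := by
      have := hg5
      rw [SimpleGraph.girth] at this
      rcases eq_or_ne G.egirth ⊤ with h | h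
      · rw [h] at this; simp at this
      · exact (ENat.toNat_eq_iff (by norm_num)).mp this
    have htf : ∀ v x y, G.Adj v x → G.Adj v y → G.Adj x y → False := by
      intro v x y hvx hvy hxy
      obtain ⟨w, hw, hwl⟩ := cycle3_exists' hvx hxy hvy.symm
      have := egirth_le_of_cycle w hw
      rw [hwl, hegirth] at this
      norm_num at this
    have hfe : ∀ v, far v = ∅ := by
      intro v
      by_contra h
      obtain ⟨x, y, h1, h2, h3⟩ := hfar_tri v (Finset.nonempty_of_ne_empty h)
      exact htf v x y h1 h2 h3
    have hediam2 : G.ediam ≤ 2 := by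
      apply SimpleGraph.ediam_le_of_edist_le
      intro u v
      have hd : G.dist u v ≤ 2 := hdist2 u v (by rw [hfe]; simp)
      obtain ⟨p, hp⟩ := (hreach u v).exists_walk_length_eq_dist
      calc G.edist u v ≤ p.length := SimpleGraph.edist_le p
        _ ≤ 2 := by rw [hp]; exact_mod_cast hd
    have hdiamle : G.diam ≤ 2 := by
      have := ENat.toNat_le_toNat hediam2 (by simp : (2:ℕ∞) ≠ ⊤)
      simpa [SimpleGraph.diam] using this
    -- there is a pair at distance 2
    obtain ⟨v⟩ := hV
    obtain ⟨u, hu⟩ : ∃ u, u ∉ insert v (G.neighborFinset v) := by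
      by_contra h
      push_neg at h
      have : Finset.univ ⊆ insert v (G.neighborFinset v) := fun z _ => h z
      have hle := Finset.card_le_card this
      rw [Finset.card_univ, hcard, Finset.card_insert_of_notMem (by simp),
        SimpleGraph.card_neighborFinset_eq_degree, hreg v] at hle
      have : κ < κ ^ 2 := by nlinarith
      omega
    simp only [Finset.mem_insert, SimpleGraph.mem_neighborFinset, not_or] at hu
    obtain ⟨huv, hadj⟩ := hu
    have h2le : 2 ≤ G.dist v u := by
      have h0 : G.dist v u ≠ 0 := by
        rw [SimpleGraph.dist_ne_zero_iff_ne_and_reachable]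
        exact ⟨Ne.symm huv, hreach v u⟩
      have h1 : G.dist v u ≠ 1 := fun h => hadj (SimpleGraph.dist_eq_one_iff_adj.mp h)
      omega
    have := SimpleGraph.dist_le_diam hetop (u := v) (v := u)
    omega
end

section
/- Let κ ≥ 2 be an integer, let n = κ² + 1, and let A be an n×n (0,1)-matrix all of whose row sums and column sums equal κ. If Θ_κ(A) = A, then κ ∈ {2, 3, 7, 57}. -/
open Matrix BigOperators

lemma myTrace_eigen {n : ℕ} {M : Matrix (Fin n) (Fin n) ℝ} (hM : M.IsHermitian) :
    M.trace = ∑ i, hM.eigenvalues i ∧ (M * M).trace = ∑ i, (hM.eigenvalues i) ^ 2 := by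
  set U : Matrix (Fin n) (Fin n) ℝ := (hM.eigenvectorUnitary : Matrix (Fin n) (Fin n) ℝ) with hUdef
  set D : Matrix (Fin n) (Fin n) ℝ := diagonal (RCLike.ofReal ∘ hM.eigenvalues) with hDdef
  have hU : star U * U = 1 := mem_unitaryGroup_iff'.mp hM.eigenvectorUnitary.2
  have hspec : M = U * D * star U := hM.spectral_theorem
  have h1 : M.trace = D.trace := by
    rw [hspec, trace_mul_comm, ← mul_assoc, hU, one_mul]
  have hDD : M * M = U * (D * D) * star U := by
    rw [hspec]
    simp only [mul_assoc]
    rw [← mul_assoc (star U) U, hU, one_mul]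
  have h2 : (M * M).trace = (D * D).trace := by
    rw [hDD, trace_mul_comm, ← mul_assoc, hU, one_mul]
  constructor
  · rw [h1, hDdef, trace_diagonal]
    simp [RCLike.ofReal]
  · rw [h2, hDdef, diagonal_mul_diagonal, trace_diagonal]
    simp [RCLike.ofReal, sq]

lemma myCubicRoot {n : ℕ} {M : Matrix (Fin n) (Fin n) ℝ} (hM : M.IsHermitian) (c d : ℝ)
    (h : (M - c • 1) * (M * M - d • 1) = 0) (i : Fin n) :
    (hM.eigenvalues i - c) * ((hM.eigenvalues i) ^ 2 - d) = 0 := by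
  set μ := hM.eigenvalues i with hμ
  set v : Fin n → ℝ := ⇑(hM.eigenvectorBasis i) with hv
  have hvne : v ≠ 0 := by
    intro h0
    exact hM.eigenvectorBasis.orthonormal.ne_zero i (by ext x; exact congrFun h0 x)
  have hMv : M *ᵥ v = μ • v := hM.mulVec_eigenvectorBasis i
  have h2 : (M * M - d • 1) *ᵥ v = (μ ^ 2 - d) • v := by
    rw [sub_mulVec, ← mulVec_mulVec, hMv, mulVec_smul, hMv, smul_smul, smul_mulVec,
      one_mulVec, sub_smul, sq]
  have h3 : ((M - c • 1) * (M * M - d • 1)) *ᵥ v = ((μ - c) * (μ ^ 2 - d)) • v := by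
    rw [← mulVec_mulVec, h2, mulVec_smul, sub_mulVec, hMv, smul_mulVec, one_mulVec,
      ← sub_smul, smul_smul, mul_comm]
  rw [h, zero_mulVec] at h3
  rcases smul_eq_zero.mp h3.symm with h4 | h4
  · exact h4
  · exact absurd h4 hvne

lemma myPartition {n : ℕ} (μ : Fin n → ℝ) (c s t : ℝ)
    (hroot : ∀ i, μ i = c ∨ μ i = s ∨ μ i = t) :
    ∃ a p q : ℕ, a + p + q = n ∧
      ∀ f : ℝ → ℝ, ∑ i, f (μ i) = a * f c + p * f s + q * f t := by
  classical
  set T := Finset.univ.filter (fun i : Fin n => μ i = c) with hT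
  set R := Finset.univ.filter (fun i : Fin n => ¬ μ i = c) with hR
  set P := R.filter (fun i : Fin n => μ i = s) with hP
  set Q := R.filter (fun i : Fin n => ¬ μ i = s) with hQ
  refine ⟨T.card, P.card, Q.card, ?_, ?_⟩
  · have h1 : T.card + R.card = n := by
      rw [hT, hR]
      rw [Finset.card_filter_add_card_filter_not]
      simp
    have h2 : P.card + Q.card = R.card := by
      rw [hP, hQ, Finset.card_filter_add_card_filter_not]
    omega
  · intro f
    have hsplit : ∑ i, f (μ i) = ∑ i ∈ T, f (μ i) + ∑ i ∈ R, f (μ i) := by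
      rw [hT, hR, Finset.sum_filter_add_sum_filter_not]
    have hsplit2 : ∑ i ∈ R, f (μ i) = ∑ i ∈ P, f (μ i) + ∑ i ∈ Q, f (μ i) := by
      rw [hP, hQ, Finset.sum_filter_add_sum_filter_not]
    have hTv : ∑ i ∈ T, f (μ i) = T.card * f c := by
      rw [Finset.sum_congr rfl (fun i hi => by
        rw [(Finset.mem_filter.mp hi).2]), Finset.sum_const, nsmul_eq_mul]
    have hPv : ∑ i ∈ P, f (μ i) = P.card * f s := by
      rw [Finset.sum_congr rfl (fun i hi => by
        rw [(Finset.mem_filter.mp hi).2]), Finset.sum_const, nsmul_eq_mul]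
    have hQv : ∑ i ∈ Q, f (μ i) = Q.card * f t := by
      refine Eq.trans (Finset.sum_congr rfl (fun i hi => ?_))
        (by rw [Finset.sum_const, nsmul_eq_mul])
      have h1 := (Finset.mem_filter.mp hi).2
      have h2 := (Finset.mem_filter.mp (Finset.mem_of_mem_filter i hi)).2
      rcases hroot i with h | h | h
      · exact absurd h h2
      · exact absurd h h1
      · rw [h]
    rw [hsplit, hsplit2, hTv, hPv, hQv]
    ring

set_option maxHeartbeats 1000000 in
theorem stmt_13 (κ : ℕ) (hκ : 2 ≤ κ)
    (A : Matrix (Fin (κ ^ 2 + 1)) (Fin (κ ^ 2 + 1)) ℤ)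
    (h01 : ∀ i j, A i j = 0 ∨ A i j = 1)
    (hrow : ∀ i, ∑ j, A i j = (κ : ℤ)) (hcol : ∀ j, ∑ i, A i j = (κ : ℤ))
    (hfix : Theta (κ ^ 2 + 1) (κ : ℤ) A = A) :
    κ = 2 ∨ κ = 3 ∨ κ = 7 ∨ κ = 57 := by
  classical
  -- A is symmetric
  have hsymm : Aᵀ = A := by
    have hth : (Theta (κ ^ 2 + 1) (κ : ℤ) A)ᵀ = Theta (κ ^ 2 + 1) (κ : ℤ) A := by
      unfold Theta
      ext i j
      simp only [transpose_apply, Matrix.sub_apply, Matrix.add_apply, Matrix.smul_apply, one_apply, of_apply,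
        mul_apply, smul_eq_mul]
      have h1 : ∑ x, A j x * A i x = ∑ x, A i x * A j x :=
        Finset.sum_congr rfl (fun k _ => mul_comm _ _)
      have h2 : (if j = i then (1 : ℤ) else 0) = (if i = j then 1 else 0) := by
        by_cases hij : i = j
        · simp [hij]
        · rw [if_neg (fun h => hij h.symm), if_neg hij]
      rw [h1, h2]
    calc Aᵀ = (Theta (κ ^ 2 + 1) (κ : ℤ) A)ᵀ := by rw [hfix]
      _ = Theta (κ ^ 2 + 1) (κ : ℤ) A := hth
      _ = A := hfix
  -- diagonal of A·Aᵀ equals κ, so A has zero diagonal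
  have hAAT : ∀ i, (A * Aᵀ) i i = (κ : ℤ) := by
    intro i
    rw [mul_apply]
    have : ∀ k : Fin (κ ^ 2 + 1), A i k * Aᵀ k i = A i k := by
      intro k
      rw [transpose_apply]
      rcases h01 i k with h | h <;> rw [h] <;> ring
    rw [Finset.sum_congr rfl (fun k _ => this k)]
    exact hrow i
  have hdiag : ∀ i, A i i = 0 := by
    intro i
    have h := Matrix.ext_iff.mpr hfix i i
    unfold Theta at h
    simp only [Matrix.sub_apply, Matrix.add_apply, Matrix.smul_apply, one_apply_eq, of_apply, smul_eq_mul,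
      mul_one] at h
    rw [hAAT i] at h
    linarith
  -- the matrix identity over ℤ
  have hZ : A * A = ((κ : ℤ) - 1) • 1 + Matrix.of (fun _ _ => (1 : ℤ)) - A := by
    have h := hfix
    unfold Theta at h
    calc A * A = A * Aᵀ := by rw [hsymm]
      _ = ((κ : ℤ) - 1) • 1 + Matrix.of (fun _ _ => (1 : ℤ)) - A := by
        rw [eq_sub_iff_add_eq]
        calc A * Aᵀ + A
            = A * Aᵀ + (((κ : ℤ) - 1) • 1 + Matrix.of (fun _ _ => (1 : ℤ)) - A * Aᵀ) := by
              rw [h]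
          _ = ((κ : ℤ) - 1) • 1 + Matrix.of (fun _ _ => (1 : ℤ)) := by abel
  -- move to ℝ
  set B : Matrix (Fin (κ ^ 2 + 1)) (Fin (κ ^ 2 + 1)) ℝ := A.map (Int.cast : ℤ → ℝ) with hB
  set JR : Matrix (Fin (κ ^ 2 + 1)) (Fin (κ ^ 2 + 1)) ℝ := Matrix.of (fun _ _ => (1 : ℝ)) with hJR
  have hB2 : B * B = ((κ : ℝ) - 1) • 1 + JR - B := by
    ext i j
    have hent := Matrix.ext_iff.mpr hZ i j
    simp only [mul_apply, Matrix.sub_apply, Matrix.add_apply, Matrix.smul_apply, one_apply, of_apply,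
      smul_eq_mul] at hent
    simp only [hB, hJR, mul_apply, Matrix.sub_apply, Matrix.add_apply, Matrix.smul_apply, one_apply, of_apply,
      smul_eq_mul, map_apply]
    have key : ((∑ k, A i k * A k j : ℤ) : ℝ)
        = ((κ : ℝ) - 1) * (if i = j then (1 : ℝ) else 0) + 1 - (A i j : ℝ) := by
      rw [hent]
      split_ifs <;> push_cast <;> ring
    push_cast at key
    exact key
  have hBJ : B * JR = (κ : ℝ) • JR := by
    ext i j
    simp only [hB, hJR, mul_apply, Matrix.smul_apply, of_apply, map_apply, mul_one, smul_eq_mul]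
    exact_mod_cast hrow i
  have hBsym' : Bᵀ = B := by
    ext i j
    simp only [hB, transpose_apply, map_apply]
    have : A j i = A i j := by
      conv_lhs => rw [← hsymm]
      rw [transpose_apply]
    exact_mod_cast this
  have hBdiag : ∀ i, B i i = 0 := by
    intro i
    simp only [hB, map_apply, hdiag i, Int.cast_zero]
  -- the matrix M = 2B + 1
  set M : Matrix (Fin (κ ^ 2 + 1)) (Fin (κ ^ 2 + 1)) ℝ := B + B + 1 with hM
  have hMsymT : Mᵀ = M := by
    rw [hM, transpose_add, transpose_add, transpose_one, hBsym']
  have hMherm : M.IsHermitian := by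
    show Mᴴ = M
    have : Mᴴ = Mᵀ := by
      ext i j
      simp [conjTranspose_apply, transpose_apply]
    rw [this, hMsymT]
  have hM2 : M * M = (4 * (κ : ℝ) - 3) • 1 + (4 : ℝ) • JR := by
    have h1 : M * M = (4 : ℝ) • (B * B) + (4 : ℝ) • B + 1 := by
      rw [hM]
      rw [add_mul, add_mul, mul_add, mul_add, mul_add, mul_add, mul_one, one_mul, one_mul]
      module
    rw [h1, hB2]
    module
  have hMJ : M * JR = (2 * (κ : ℝ) + 1) • JR := by
    have hoJ : (1 : Matrix (Fin (κ ^ 2 + 1)) (Fin (κ ^ 2 + 1)) ℝ) * JR = JR := one_mul _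
    rw [hM, add_mul, add_mul, hBJ, hoJ]
    module
  have hcube : (M - (2 * (κ : ℝ) + 1) • 1) * (M * M - (4 * (κ : ℝ) - 3) • 1) = 0 := by
    rw [hM2]
    have h2 : ((4 * (κ : ℝ) - 3) • (1 : Matrix (Fin (κ ^ 2 + 1)) (Fin (κ ^ 2 + 1)) ℝ) + (4 : ℝ) • JR)
        - (4 * (κ : ℝ) - 3) • (1 : Matrix (Fin (κ ^ 2 + 1)) (Fin (κ ^ 2 + 1)) ℝ) = (4 : ℝ) • JR := by
      module
    rw [h2, sub_mul, mul_smul_comm, hMJ, smul_mul_assoc, one_mul, smul_smul, smul_smul]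
    rw [← sub_smul]
    have : (2 * (κ : ℝ) + 1) * 4 = 4 * (2 * (κ : ℝ) + 1) := by ring
    rw [mul_comm (4:ℝ) (2 * (κ : ℝ) + 1)]
    simp
  -- traces
  have htrB : B.trace = 0 := by
    unfold Matrix.trace
    exact Finset.sum_eq_zero (fun i _ => hBdiag i)
  have htrJ : JR.trace = ((κ ^ 2 + 1 : ℕ) : ℝ) := by
    unfold Matrix.trace
    simp [hJR, Matrix.diag]
  have htrM : M.trace = ((κ ^ 2 + 1 : ℕ) : ℝ) := by
    rw [hM, trace_add, trace_add, htrB, trace_one]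
    simp
  have htrMM : (M * M).trace = (4 * (κ : ℝ) - 3) * ((κ ^ 2 + 1 : ℕ) : ℝ) + 4 * ((κ ^ 2 + 1 : ℕ) : ℝ) := by
    rw [hM2, trace_add, trace_smul, trace_smul, trace_one, htrJ]
    simp [smul_eq_mul]
  -- eigenvalues
  set μ := hMherm.eigenvalues with hμ
  obtain ⟨htr1, htr2⟩ := myTrace_eigen hMherm
  have hcub := myCubicRoot hMherm (2 * (κ : ℝ) + 1) (4 * (κ : ℝ) - 3) hcube
  set s0 : ℝ := Real.sqrt (4 * (κ : ℝ) - 3) with hs0def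
  have hs0pos : 0 < s0 := by
    apply Real.sqrt_pos.mpr
    have : (2 : ℝ) ≤ (κ : ℝ) := by exact_mod_cast hκ
    linarith
  have hs0sq : s0 ^ 2 = 4 * (κ : ℝ) - 3 := by
    rw [hs0def, sq]
    apply Real.mul_self_sqrt
    have : (2 : ℝ) ≤ (κ : ℝ) := by exact_mod_cast hκ
    linarith
  have hroots : ∀ i, μ i = 2 * (κ : ℝ) + 1 ∨ μ i = s0 ∨ μ i = -s0 := by
    intro i
    rcases mul_eq_zero.mp (hcub i) with h | h
    · left; linarith [sub_eq_zero.mp h]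
    · right
      have : (μ i - s0) * (μ i + s0) = 0 := by
        rw [← hs0sq] at h
        ring_nf
        ring_nf at h
        linarith [h]
      rcases mul_eq_zero.mp this with h' | h'
      · left; linarith [sub_eq_zero.mp h']
      · right; linarith [h']
  obtain ⟨a, p, q, hcard, hsum⟩ := myPartition μ (2 * (κ : ℝ) + 1) s0 (-s0) hroots
  have e1 : (a : ℝ) * (2 * (κ : ℝ) + 1) + p * s0 + q * (-s0) = ((κ ^ 2 + 1 : ℕ) : ℝ) := by
    have := hsum id
    simp only [id] at this
    rw [← this, ← htr1, htrM]
  have e2 : (a : ℝ) * (2 * (κ : ℝ) + 1) ^ 2 + p * s0 ^ 2 + q * s0 ^ 2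
      = (4 * (κ : ℝ) - 3) * ((κ ^ 2 + 1 : ℕ) : ℝ) + 4 * ((κ ^ 2 + 1 : ℕ) : ℝ) := by
    have h := hsum (fun x => x ^ 2)
    simp only [neg_sq] at h
    rw [← h, ← htr2]
    exact htrMM
  have hpq : (a : ℝ) + p + q = ((κ ^ 2 + 1 : ℕ) : ℝ) := by exact_mod_cast hcard
  have hnr : ((κ ^ 2 + 1 : ℕ) : ℝ) = (κ : ℝ) ^ 2 + 1 := by
    push_cast; ring
  -- a = 1
  have ha1 : (a : ℝ) = 1 := by
    have hfact : ((a : ℝ) - 1) * (4 * (κ : ℝ) ^ 2 + 4) = 0 := by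
      rw [hs0sq] at e2
      rw [hnr] at e2 hpq
      linear_combination e2 - (4 * (κ : ℝ) - 3) * hpq
    rcases mul_eq_zero.mp hfact with h | h
    · linarith
    · nlinarith [sq_nonneg ((κ : ℝ))]
  have hds : ((p : ℝ) - (q : ℝ)) * s0 = (κ : ℝ) ^ 2 - 2 * (κ : ℝ) := by
    rw [hnr] at e1
    rw [ha1] at e1
    linarith [e1]
  -- case split
  by_cases hκ2 : κ = 2
  · exact Or.inl hκ2
  have hκ3 : 3 ≤ κ := by omega
  -- the integer d
  set d : ℤ := (p : ℤ) - (q : ℤ) with hd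
  have hds' : (d : ℝ) * s0 = (κ : ℝ) ^ 2 - 2 * (κ : ℝ) := by
    rw [hd]
    push_cast
    exact hds
  have hd2r : (d : ℝ) ^ 2 * (4 * (κ : ℝ) - 3) = ((κ : ℝ) ^ 2 - 2 * (κ : ℝ)) ^ 2 := by
    rw [← hs0sq, ← hds']
    ring
  have hd2 : d ^ 2 * (4 * (κ : ℤ) - 3) = ((κ : ℤ) ^ 2 - 2 * (κ : ℤ)) ^ 2 := by
    exact_mod_cast hd2r
  set c0 : ℤ := (κ : ℤ) ^ 2 - 2 * (κ : ℤ) with hc0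
  have hc0pos : 0 < c0 := by
    rw [hc0]
    have : (3 : ℤ) ≤ (κ : ℤ) := by exact_mod_cast hκ3
    nlinarith
  have hdne : d ≠ 0 := by
    intro h0
    rw [h0] at hd2
    simp at hd2
    nlinarith [hd2, hc0pos]
  have hdvd : d ^ 2 ∣ c0 ^ 2 := ⟨4 * (κ : ℤ) - 3, hd2.symm⟩
  have hddvd : d ∣ c0 := (Int.pow_dvd_pow_iff two_ne_zero).mp hdvd
  obtain ⟨s, hs⟩ := hddvd
  have hs2 : s ^ 2 = 4 * (κ : ℤ) - 3 := by
    have h1 : d ^ 2 * (4 * (κ : ℤ) - 3) = d ^ 2 * s ^ 2 := by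
      rw [hd2, hs]; ring
    have := mul_left_cancel₀ (pow_ne_zero 2 hdne) h1
    linarith
  have h15 : s ∣ 15 := by
    refine ⟨s ^ 3 - 2 * s - 16 * d, ?_⟩
    have h16 : 16 * c0 = s ^ 4 - 2 * s ^ 2 - 15 := by
      rw [hc0]
      linear_combination (-(s ^ 2 + 4 * (κ : ℤ) - 5)) * hs2
    have : 16 * (d * s) = s ^ 4 - 2 * s ^ 2 - 15 := by rw [← hs]; exact h16
    linear_combination this
  -- finish: natAbs of s divides 15, s^2 = 4κ-3
  have hm15 : s.natAbs ∣ 15 := by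
    rw [← Int.natAbs_natCast 15]
    exact Int.natAbs_dvd_natAbs.mpr h15
  have hmsq : (s.natAbs : ℤ) ^ 2 = 4 * (κ : ℤ) - 3 := by
    rw [← hs2, ← sq_abs s, Int.abs_eq_natAbs]
  have hm2 : s.natAbs ^ 2 + 3 = 4 * κ := by
    have h2 : ((s.natAbs : ℤ)) ^ 2 + 3 = 4 * (κ : ℤ) := by linarith [hmsq]
    exact_mod_cast h2
  obtain ⟨m, hmdef⟩ : ∃ m, m = s.natAbs := ⟨s.natAbs, rfl⟩
  rw [← hmdef] at hm15 hm2
  have hmle : m ≤ 15 := Nat.le_of_dvd (by norm_num) hm15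
  have hmpos : 1 ≤ m := by
    rcases Nat.eq_zero_or_pos m with h0 | h
    · rw [h0] at hm2; omega
    · exact h
  interval_cases m <;>
    first
      | (exfalso; revert hm15; decide)
      | (norm_num at hm2; omega)
end

section
/- Let κ ≥ 2 be an integer and let P be a symmetric (0,1)-matrix of order κ(κ−1) with all row and column sums equal to κ − 1, viewed as a κ×κ matrix of blocks P_{ij} of order κ − 1, such that every block P_{ij} has at most one entry 1 in each row and at most one entry 1 in each column. If P_{i₀j₀} is the zero matrix for some indices i₀, j₀, then every other block in block-row i₀ (i.e. each P_{i₀j} with j ≠ j₀) and every other block in block-column j₀ (i.e. each P_{ij₀} with i ≠ i₀) is a permutation matrix. -/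
open Matrix BigOperators

/-- A permutation matrix: a `(0,1)`-matrix with exactly one entry `1` in each row and column. -/
def IsPermMatrix {n : ℕ} (S : Matrix (Fin n) (Fin n) ℤ) : Prop :=
  (∀ i j, S i j = 0 ∨ S i j = 1) ∧ (∀ i, ∑ j, S i j = 1) ∧ (∀ j, ∑ i, S i j = 1)

/-- The block `P_{st}` (for `s, t : Fin κ`) of a matrix `P` of order `κ(κ-1)`, viewed as a
`κ×κ` matrix of square blocks of order `κ-1` obtained by partitioning the rows and columns
into `κ` consecutive groups of size `κ-1`. -/
def matBlock (κ : ℕ) (P : Matrix (Fin (κ * (κ - 1))) (Fin (κ * (κ - 1))) ℤ)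
    (s t : Fin κ) : Matrix (Fin (κ - 1)) (Fin (κ - 1)) ℤ :=
  Matrix.of fun a b =>
    P ⟨s.val * (κ - 1) + a.val, by
        calc s.val * (κ - 1) + a.val < s.val * (κ - 1) + (κ - 1) :=
              Nat.add_lt_add_left a.isLt _
          _ = (s.val + 1) * (κ - 1) := by ring
          _ ≤ κ * (κ - 1) := Nat.mul_le_mul_right _ s.isLt⟩
      ⟨t.val * (κ - 1) + b.val, by
        calc t.val * (κ - 1) + b.val < t.val * (κ - 1) + (κ - 1) :=
              Nat.add_lt_add_left b.isLt _
          _ = (t.val + 1) * (κ - 1) := by ring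
          _ ≤ κ * (κ - 1) := Nat.mul_le_mul_right _ t.isLt⟩

lemma sum01_le_one {n : ℕ} (f : Fin n → ℤ) (h01 : ∀ b, f b = 0 ∨ f b = 1)
    (huniq : ∀ b b', b ≠ b' → f b = 1 → f b' = 1 → False) : ∑ b, f b ≤ 1 := by
  by_cases h : ∃ b, f b = 1
  · obtain ⟨b, hb⟩ := h
    rw [Finset.sum_eq_single b]
    · exact le_of_eq hb
    · intro b' _ hne
      rcases h01 b' with h0 | h1
      · exact h0
      · exact (huniq b' b hne h1 hb).elim
    · intro h; exact absurd (Finset.mem_univ b) h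
  · push_neg at h
    have hz : ∀ b, f b = 0 := fun b => (h01 b).resolve_right (h b)
    simp [hz]

lemma all_eq_one {α : Type*} (s : Finset α) (f : α → ℤ)
    (hsum : ∑ x ∈ s, f x = (s.card : ℤ)) (hle : ∀ x ∈ s, f x ≤ 1) :
    ∀ x ∈ s, f x = 1 := by
  intro x hx
  by_contra hne
  have hlt : f x < 1 := lt_of_le_of_ne (hle x hx) hne
  have h2 : ∑ x ∈ s, f x < ∑ _x ∈ s, (1 : ℤ) :=
    Finset.sum_lt_sum (fun i hi => hle i hi) ⟨x, hx, hlt⟩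
  rw [hsum, Finset.sum_const] at h2
  simp at h2

lemma sum_block_decomp {m n : ℕ} (f : Fin (m * n) → ℤ) :
    ∑ j, f j = ∑ t : Fin m, ∑ b : Fin n, f (finProdFinEquiv (t, b)) := by
  rw [← Equiv.sum_comp (finProdFinEquiv : Fin m × Fin n ≃ Fin (m * n)) f,
    Fintype.sum_prod_type]

lemma perm_of_rowsums {n : ℕ} (M : Matrix (Fin n) (Fin n) ℤ)
    (h01 : ∀ a b, M a b = 0 ∨ M a b = 1)
    (hcu : ∀ a a' b, a ≠ a' → M a b = 1 → M a' b = 1 → False)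
    (hrows : ∀ a, ∑ b, M a b = 1) : IsPermMatrix M := by
  refine ⟨h01, hrows, ?_⟩
  have hle : ∀ b, ∑ a, M a b ≤ 1 := fun b =>
    sum01_le_one (fun a => M a b) (fun a => h01 a b) (fun a a' h => hcu a a' b h)
  have hsum : ∑ b, ∑ a, M a b = ((Finset.univ : Finset (Fin n)).card : ℤ) := by
    rw [Finset.sum_comm]
    simp [hrows]
  exact fun b => all_eq_one Finset.univ _ hsum (fun b _ => hle b) b (Finset.mem_univ b)

lemma perm_of_colsums {n : ℕ} (M : Matrix (Fin n) (Fin n) ℤ)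
    (h01 : ∀ a b, M a b = 0 ∨ M a b = 1)
    (hru : ∀ a b b', b ≠ b' → M a b = 1 → M a b' = 1 → False)
    (hcols : ∀ b, ∑ a, M a b = 1) : IsPermMatrix M := by
  obtain ⟨h1, h2, h3⟩ := perm_of_rowsums Mᵀ (fun a b => h01 b a)
    (fun a a' b h => hru b a a' h) hcols
  exact ⟨fun i j => h1 j i, fun i => h3 i, fun j => h2 j⟩

theorem stmt_18 (κ : ℕ) (hκ : 2 ≤ κ)
    (P : Matrix (Fin (κ * (κ - 1))) (Fin (κ * (κ - 1))) ℤ)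
    (hsymm : P.IsSymm)
    (h01 : ∀ i j, P i j = 0 ∨ P i j = 1)
    (hrow : ∀ i, ∑ j, P i j = (κ : ℤ) - 1) (hcol : ∀ j, ∑ i, P i j = (κ : ℤ) - 1)
    (hblockrows : ∀ (s t : Fin κ) (a b b' : Fin (κ - 1)), b ≠ b' →
      matBlock κ P s t a b = 1 → matBlock κ P s t a b' = 1 → False)
    (hblockcols : ∀ (s t : Fin κ) (a a' b : Fin (κ - 1)), a ≠ a' →
      matBlock κ P s t a b = 1 → matBlock κ P s t a' b = 1 → False)
    (s₀ t₀ : Fin κ) (hzero : matBlock κ P s₀ t₀ = 0) :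
    (∀ t : Fin κ, t ≠ t₀ → IsPermMatrix (matBlock κ P s₀ t)) ∧
    (∀ s : Fin κ, s ≠ s₀ → IsPermMatrix (matBlock κ P s t₀)) := by
  have h1κ : 1 ≤ κ := le_trans (by norm_num) hκ
  -- entries of blocks are entries of P
  have key : ∀ (s t : Fin κ) (a b : Fin (κ - 1)),
      P (finProdFinEquiv (s, a)) (finProdFinEquiv (t, b)) = matBlock κ P s t a b := by
    intro s t a b
    show P _ _ = P _ _
    congr 1 <;> · apply Fin.ext
                  simp [finProdFinEquiv]
                  ring
  have hb01 : ∀ (s t : Fin κ) (a b : Fin (κ - 1)),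
      matBlock κ P s t a b = 0 ∨ matBlock κ P s t a b = 1 := by
    intro s t a b
    rw [← key]
    exact h01 _ _
  -- row-sum decomposition
  have hrowblock : ∀ (s : Fin κ) (a : Fin (κ - 1)),
      ∑ t : Fin κ, ∑ b, matBlock κ P s t a b = (κ : ℤ) - 1 := by
    intro s a
    have h := hrow (finProdFinEquiv (s, a))
    rw [sum_block_decomp] at h
    simp only [key] at h
    exact h
  have hcolblock : ∀ (t : Fin κ) (b : Fin (κ - 1)),
      ∑ s : Fin κ, ∑ a, matBlock κ P s t a b = (κ : ℤ) - 1 := by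
    intro t b
    have h := hcol (finProdFinEquiv (t, b))
    rw [show (∑ i, P i (finProdFinEquiv (t, b))) =
        ∑ s : Fin κ, ∑ a : Fin (κ - 1), P (finProdFinEquiv (s, a)) (finProdFinEquiv (t, b))
      from sum_block_decomp _] at h
    simp only [key] at h
    exact h
  -- each block row/column sum is at most 1
  have hble : ∀ (s t : Fin κ) (a : Fin (κ - 1)), ∑ b, matBlock κ P s t a b ≤ 1 :=
    fun s t a => sum01_le_one _ (fun b => hb01 s t a b)
      (fun b b' h => hblockrows s t a b b' h)
  have hcle : ∀ (s t : Fin κ) (b : Fin (κ - 1)), ∑ a, matBlock κ P s t a b ≤ 1 :=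
    fun s t b => sum01_le_one _ (fun a => hb01 s t a b)
      (fun a a' h => hblockcols s t a a' b h)
  have hcard : ((Finset.univ.erase t₀ : Finset (Fin κ)).card : ℤ) = (κ : ℤ) - 1 := by
    rw [Finset.card_erase_of_mem (Finset.mem_univ t₀), Finset.card_univ, Fintype.card_fin]
    omega
  have hcard' : ((Finset.univ.erase s₀ : Finset (Fin κ)).card : ℤ) = (κ : ℤ) - 1 := by
    rw [Finset.card_erase_of_mem (Finset.mem_univ s₀), Finset.card_univ, Fintype.card_fin]
    omega
  constructor
  · intro t ht
    apply perm_of_rowsums _ (fun a b => hb01 s₀ t a b)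
      (fun a a' b h => hblockcols s₀ t a a' b h)
    intro a
    have hz : ∑ b, matBlock κ P s₀ t₀ a b = 0 := by
      simp [hzero]
    have hsum' : ∑ x ∈ Finset.univ.erase t₀, (∑ b, matBlock κ P s₀ x a b) =
        ((Finset.univ.erase t₀ : Finset (Fin κ)).card : ℤ) := by
      have h := hrowblock s₀ a
      rw [← Finset.add_sum_erase _ _ (Finset.mem_univ t₀), hz, zero_add] at h
      rw [h, hcard]
    exact all_eq_one _ _ hsum' (fun x _ => hble s₀ x a) t
      (Finset.mem_erase.mpr ⟨ht, Finset.mem_univ t⟩)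
  · intro s hs
    apply perm_of_colsums _ (fun a b => hb01 s t₀ a b)
      (fun a b b' h => hblockrows s t₀ a b b' h)
    intro b
    have hz : ∑ a, matBlock κ P s₀ t₀ a b = 0 := by
      simp [hzero]
    have hsum' : ∑ x ∈ Finset.univ.erase s₀, (∑ a, matBlock κ P x t₀ a b) =
        ((Finset.univ.erase s₀ : Finset (Fin κ)).card : ℤ) := by
      have h := hcolblock t₀ b
      rw [← Finset.add_sum_erase _ _ (Finset.mem_univ s₀), hz, zero_add] at h
      rw [h, hcard']
    exact all_eq_one _ _ hsum' (fun x _ => hcle x t₀ b) s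
      (Finset.mem_erase.mpr ⟨hs, Finset.mem_univ s⟩)
end
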